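/- If a Hoffman graph 𝔥 is the sum 𝔥 = 𝔥¹ ⊎ 𝔥² of two nonempty induced Hoffman subgraphs 𝔥¹ and 𝔥², then λ_min(𝔥) = min{λ_min(𝔥¹), λ_min(𝔥²)}. -/

import Mathlib

attribute [local instance] Classical.propDecidable

open scoped RealInnerProductSpace

/-- A Hoffman graph: a graph together with a labeling of its vertices as fat or slim,
such that every fat vertex has a slim neighbor and fat vertices are pairwise nonadjacent. -/
structure HoffmanGraph (V : Type*) where
  graph : SimpleGraph V
  IsFat : V → Prop
  fat_not_adj : ∀ {x y : V}, IsFat x → IsFat y → ¬ graph.Adj x y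
  fat_slim_nbr : ∀ {x : V}, IsFat x → ∃ y : V, ¬ IsFat y ∧ graph.Adj x y

namespace HoffmanGraph

variable {V : Type*}

/-- A vertex is slim if it is not fat. -/
def IsSlim (H : HoffmanGraph V) (x : V) : Prop := ¬ H.IsFat x

/-- The type of slim vertices. -/
abbrev Slim (H : HoffmanGraph V) := {v : V // H.IsSlim v}

/-- The number of fat neighbors of a vertex. -/
noncomputable def fatDeg (H : HoffmanGraph V) (x : V) : ℕ :=
  {f : V | H.IsFat f ∧ H.graph.Adj x f}.ncard

/-- The number of common fat neighbors of two vertices. -/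
noncomputable def commonFat (H : HoffmanGraph V) (x y : V) : ℕ :=
  {f : V | H.IsFat f ∧ H.graph.Adj x f ∧ H.graph.Adj y f}.ncard

lemma commonFat_comm (H : HoffmanGraph V) (x y : V) :
    H.commonFat x y = H.commonFat y x := by
  unfold commonFat
  congr 1
  ext f
  simp only [Set.mem_setOf_eq]
  tauto

/-- A Hoffman graph is fat if every slim vertex has a fat neighbor. -/
def IsFatGraph (H : HoffmanGraph V) : Prop :=
  ∀ x, H.IsSlim x → ∃ f, H.IsFat f ∧ H.graph.Adj x f

/-- A representation of norm `m`. -/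
def IsRep (H : HoffmanGraph V) (m : ℝ) {E : Type*} [NormedAddCommGroup E]
    [InnerProductSpace ℝ E] (φ : V → E) : Prop :=
  (∀ x, H.IsSlim x → ⟪φ x, φ x⟫ = m) ∧
  (∀ x, H.IsFat x → ⟪φ x, φ x⟫ = 1) ∧
  (∀ x y, H.graph.Adj x y → ⟪φ x, φ y⟫ = 1) ∧
  (∀ x y, x ≠ y → ¬ H.graph.Adj x y → ⟪φ x, φ y⟫ = 0)

/-- A reduced representation of norm `m` (only the values on slim vertices matter). -/
def IsReducedRep (H : HoffmanGraph V) (m : ℝ) {E : Type*} [NormedAddCommGroup E]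
    [InnerProductSpace ℝ E] (ψ : V → E) : Prop :=
  (∀ x, H.IsSlim x → ⟪ψ x, ψ x⟫ = m - H.fatDeg x) ∧
  (∀ x y, H.IsSlim x → H.IsSlim y → H.graph.Adj x y → ⟪ψ x, ψ y⟫ = 1 - H.commonFat x y) ∧
  (∀ x y, H.IsSlim x → H.IsSlim y → x ≠ y → ¬ H.graph.Adj x y →
    ⟪ψ x, ψ y⟫ = - (H.commonFat x y : ℝ))

/-- The matrix B(𝔥) = A_s − C Cᵀ, indexed by the slim vertices. -/
noncomputable def matrixB (H : HoffmanGraph V) : Matrix H.Slim H.Slim ℝ :=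
  fun x y => (if H.graph.Adj x.1 y.1 then (1 : ℝ) else 0) - (H.commonFat x.1 y.1 : ℝ)

/-- The smallest eigenvalue of a Hoffman graph. -/
noncomputable def lambdaMin (H : HoffmanGraph V) [Fintype V] : ℝ :=
  sInf (spectrum ℝ H.matrixB)

/-- A subset of the vertices induces a Hoffman graph iff every fat vertex of it retains
a slim neighbor inside it. -/
def IsGoodSubset (H : HoffmanGraph V) (S : Set V) : Prop :=
  ∀ x ∈ S, H.IsFat x → ∃ y ∈ S, ¬ H.IsFat y ∧ H.graph.Adj x y

/-- The induced Hoffman subgraph on a good subset. -/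
def induce (H : HoffmanGraph V) (S : Set V) (hS : H.IsGoodSubset S) : HoffmanGraph S where
  graph := H.graph.induce S
  IsFat := fun x => H.IsFat x.1
  fat_not_adj := by
    intro x y hx hy hadj
    exact H.fat_not_adj hx hy hadj
  fat_slim_nbr := by
    rintro ⟨x, hxS⟩ hx
    obtain ⟨y, hyS, hy, hadj⟩ := hS x hxS hx
    exact ⟨⟨y, hyS⟩, hy, hadj⟩

/-- An (abstract) induced Hoffman subgraph relation between Hoffman graphs. -/
def IsInducedSubgraphOf {V₁ V₂ : Type*} (H₁ : HoffmanGraph V₁) (H₂ : HoffmanGraph V₂) : Prop :=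
  ∃ e : V₁ ↪ V₂, (∀ x y, H₂.graph.Adj (e x) (e y) ↔ H₁.graph.Adj x y) ∧
    (∀ x, H₂.IsFat (e x) ↔ H₁.IsFat x)

/-- Isomorphism of Hoffman graphs. -/
def IsIsoTo {V₁ V₂ : Type*} (H₁ : HoffmanGraph V₁) (H₂ : HoffmanGraph V₂) : Prop :=
  ∃ e : V₁ ≃ V₂, (∀ x y, H₂.graph.Adj (e x) (e y) ↔ H₁.graph.Adj x y) ∧
    (∀ x, H₂.IsFat (e x) ↔ H₁.IsFat x)

/-- `H` is the sum of its induced subgraphs on `W₁` and `W₂`. -/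
structure IsSum (H : HoffmanGraph V) (W₁ W₂ : Set V) : Prop where
  nonempty₁ : W₁.Nonempty
  nonempty₂ : W₂.Nonempty
  good₁ : H.IsGoodSubset W₁
  good₂ : H.IsGoodSubset W₂
  union_eq : W₁ ∪ W₂ = Set.univ
  slim_partition : ∀ v, H.IsSlim v → (v ∈ W₁ ↔ v ∉ W₂)
  fat_closed₁ : ∀ x ∈ W₁, H.IsSlim x → ∀ f, H.IsFat f → H.graph.Adj x f → f ∈ W₁
  fat_closed₂ : ∀ x ∈ W₂, H.IsSlim x → ∀ f, H.IsFat f → H.graph.Adj x f → f ∈ W₂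
  common_le : ∀ x ∈ W₁, ∀ y ∈ W₂, H.IsSlim x → H.IsSlim y → H.commonFat x y ≤ 1
  common_iff : ∀ x ∈ W₁, ∀ y ∈ W₂, H.IsSlim x → H.IsSlim y →
    (H.commonFat x y = 1 ↔ H.graph.Adj x y)

/-- `H` is decomposable if it is the sum of two nonempty induced Hoffman subgraphs. -/
def Decomposable (H : HoffmanGraph V) : Prop := ∃ W₁ W₂ : Set V, H.IsSum W₁ W₂

def Indecomposable (H : HoffmanGraph V) : Prop := ¬ H.Decomposable

/-- `H` is the sum of the family of its induced subgraphs on `W i`. -/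
structure IsSumFamily (H : HoffmanGraph V) {n : ℕ} (W : Fin n → Set V) : Prop where
  nonempty : ∀ i, (W i).Nonempty
  good : ∀ i, H.IsGoodSubset (W i)
  union_eq : ⋃ i, W i = Set.univ
  slim_mem_unique : ∀ v, H.IsSlim v → ∃! i, v ∈ W i
  fat_closed : ∀ i, ∀ x ∈ W i, H.IsSlim x → ∀ f, H.IsFat f → H.graph.Adj x f → f ∈ W i
  common_le : ∀ i j, i ≠ j → ∀ x ∈ W i, ∀ y ∈ W j, H.IsSlim x → H.IsSlim y →
    H.commonFat x y ≤ 1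
  common_iff : ∀ i j, i ≠ j → ∀ x ∈ W i, ∀ y ∈ W j, H.IsSlim x → H.IsSlim y →
    (H.commonFat x y = 1 ↔ H.graph.Adj x y)

/-- Attach a new fat vertex (the `none` vertex) adjacent exactly to the slim vertices in `S`. -/
def attachFat (H : HoffmanGraph V) (S : Set V) (hne : S.Nonempty)
    (hslim : ∀ v ∈ S, H.IsSlim v) : HoffmanGraph (Option V) where
  graph := {
    Adj := fun a b =>
      match a, b with
      | none, none => False
      | none, some v => v ∈ S
      | some v, none => v ∈ S
      | some u, some v => H.graph.Adj u v
    symm := by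
      refine ⟨?_⟩
      rintro (_|u) (_|v) h
      · exact h.elim
      · exact h
      · exact h
      · exact h.symm
    loopless := by
      refine ⟨?_⟩
      rintro (_|u) h
      · exact h.elim
      · exact H.graph.loopless.irrefl u h }
  IsFat := fun a => match a with | none => True | some v => H.IsFat v
  fat_not_adj := by
    rintro (_|u) (_|v) hu hv h
    · exact h.elim
    · exact (hslim v h) hv
    · exact (hslim u h) hu
    · exact H.fat_not_adj hu hv h
  fat_slim_nbr := by
    rintro (_|u) hu
    · obtain ⟨s, hs⟩ := hne
      exact ⟨some s, hslim s hs, hs⟩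
    · obtain ⟨y, hy, hadj⟩ := H.fat_slim_nbr hu
      exact ⟨some y, hy, hadj⟩

/-- `H` is `μ`-saturated: it has smallest eigenvalue at least `μ` and no fat vertex can be
attached while keeping the smallest eigenvalue at least `μ`. -/
def IsSaturated (H : HoffmanGraph V) [Fintype V] (μ : ℝ) : Prop :=
  μ ≤ H.lambdaMin ∧
  ∀ (S : Set V) (hne : S.Nonempty) (hslim : ∀ v ∈ S, H.IsSlim v),
    ¬ (μ ≤ (H.attachFat S hne hslim).lambdaMin)

/-- The special graph `S⁻(𝔥)`: slim vertices, adjacent when the inner product of their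
reduced representations is negative. -/
noncomputable def specialMinus (H : HoffmanGraph V) : SimpleGraph H.Slim where
  Adj x y := x ≠ y ∧
    ((H.graph.Adj x.1 y.1 ∧ (1 : ℝ) - (H.commonFat x.1 y.1 : ℝ) < 0) ∨
     (¬ H.graph.Adj x.1 y.1 ∧ -(H.commonFat x.1 y.1 : ℝ) < 0))
  symm := by
    refine ⟨?_⟩
    rintro x y ⟨hne, h⟩
    refine ⟨hne.symm, ?_⟩
    rw [H.commonFat_comm y.1 x.1]
    rcases h with ⟨ha, hl⟩ | ⟨ha, hl⟩
    · exact Or.inl ⟨ha.symm, hl⟩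
    · exact Or.inr ⟨fun hadj => ha hadj.symm, hl⟩
  loopless := ⟨fun x h => h.1 rfl⟩

/-- The special graph `S⁺(𝔥)`: slim vertices, adjacent when the inner product of their
reduced representations is positive. -/
noncomputable def specialPlus (H : HoffmanGraph V) : SimpleGraph H.Slim where
  Adj x y := x ≠ y ∧
    ((H.graph.Adj x.1 y.1 ∧ 0 < (1 : ℝ) - (H.commonFat x.1 y.1 : ℝ)) ∨
     (¬ H.graph.Adj x.1 y.1 ∧ 0 < -(H.commonFat x.1 y.1 : ℝ)))
  symm := by
    refine ⟨?_⟩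
    rintro x y ⟨hne, h⟩
    refine ⟨hne.symm, ?_⟩
    rw [H.commonFat_comm y.1 x.1]
    rcases h with ⟨ha, hl⟩ | ⟨ha, hl⟩
    · exact Or.inl ⟨ha.symm, hl⟩
    · exact Or.inr ⟨fun hadj => ha hadj.symm, hl⟩
  loopless := ⟨fun x h => h.1 rfl⟩

/-- The special graph `S(𝔥)`, the union of `S⁻(𝔥)` and `S⁺(𝔥)`. -/
noncomputable def special (H : HoffmanGraph V) : SimpleGraph H.Slim :=
  H.specialMinus ⊔ H.specialPlus

/-- `⟨S⟩_𝔥`: the set `S` together with all fat neighbors of its members. -/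
def closureSet (H : HoffmanGraph V) (S : Set V) : Set V :=
  S ∪ {f | H.IsFat f ∧ ∃ x ∈ S, H.graph.Adj x f}

/-- The Hoffman graph `𝔥^(t)` with one slim vertex (`none`) and `t` fat vertices. -/
def manyFat (t : ℕ) : HoffmanGraph (Option (Fin t)) where
  graph := {
    Adj := fun a b => (a = none ∧ b ≠ none) ∨ (a ≠ none ∧ b = none)
    symm := by
      refine ⟨?_⟩
      rintro a b (⟨h1, h2⟩ | ⟨h1, h2⟩)
      · exact Or.inr ⟨h2, h1⟩
      · exact Or.inl ⟨h2, h1⟩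
    loopless := by
      refine ⟨?_⟩
      rintro a (⟨h1, h2⟩ | ⟨h1, h2⟩)
      · exact h2 h1
      · exact h1 h2 }
  IsFat := fun a => a ≠ none
  fat_not_adj := by
    rintro a b ha hb (⟨h1, _⟩ | ⟨_, h1⟩)
    · exact ha h1
    · exact hb h1
  fat_slim_nbr := by
    intro a ha
    refine ⟨none, by simp, Or.inr ⟨ha, rfl⟩⟩

/-- An ordinary (slim) graph regarded as a Hoffman graph. -/
def ofSimple {W : Type*} (G : SimpleGraph W) : HoffmanGraph W where
  graph := G
  IsFat := fun _ => False
  fat_not_adj := by intro x y hx _ _; exact hx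
  fat_slim_nbr := by intro x hx; exact hx.elim

end HoffmanGraph
namespace HoffmanGraph

variable {V : Type*}

/-- The Hoffman graph obtained by replacing the fat vertices `f i` by slim cliques of
sizes `n i`, joining all neighbors of `f i` to all vertices of the `i`-th clique. -/
def blowup {k : ℕ} (H : HoffmanGraph V) (f : Fin k → V) (hf : ∀ i, H.IsFat (f i))
    (n : Fin k → ℕ) :
    HoffmanGraph ({v : V // v ∉ Set.range f} ⊕ (Σ i : Fin k, Fin (n i))) where
  graph := {
    Adj := fun a b =>
      match a, b with
      | .inl u, .inl v => H.graph.Adj u.1 v.1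
      | .inl u, .inr x => H.graph.Adj u.1 (f x.1)
      | .inr x, .inl v => H.graph.Adj (f x.1) v.1
      | .inr x, .inr y => x ≠ y ∧ x.1 = y.1
    symm := by
      refine ⟨?_⟩
      rintro (u|x) (v|y) h
      · exact h.symm
      · exact h.symm
      · exact h.symm
      · exact ⟨h.1.symm, h.2.symm⟩
    loopless := by
      refine ⟨?_⟩
      rintro (u|x) h
      · exact H.graph.loopless.irrefl _ h
      · exact h.1 rfl }
  IsFat := fun a => match a with | .inl u => H.IsFat u.1 | .inr _ => False
  fat_not_adj := by
    rintro (u|x) (v|y) hu hv h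
    · exact H.fat_not_adj hu hv h
    · exact hv
    · exact hu
    · exact hu
  fat_slim_nbr := by
    rintro (u|x) hu
    · obtain ⟨y, hy, hadj⟩ := H.fat_slim_nbr hu
      refine ⟨Sum.inl ⟨y, ?_⟩, hy, hadj⟩
      rintro ⟨i, rfl⟩
      exact hy (hf i)
    · exact hu.elim

/-- The slim graph obtained by replacing every fat vertex by a slim `n`-clique,
joining all neighbors of a fat vertex to all vertices of its clique. -/
def blowupAll (H : HoffmanGraph V) (n : ℕ) :
    HoffmanGraph (H.Slim ⊕ ({f : V // H.IsFat f} × Fin n)) where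
  graph := {
    Adj := fun a b =>
      match a, b with
      | .inl u, .inl v => H.graph.Adj u.1 v.1
      | .inl u, .inr x => H.graph.Adj u.1 x.1.1
      | .inr x, .inl v => H.graph.Adj x.1.1 v.1
      | .inr x, .inr y => x ≠ y ∧ x.1 = y.1
    symm := by
      refine ⟨?_⟩
      rintro (u|x) (v|y) h
      · exact h.symm
      · exact h.symm
      · exact h.symm
      · exact ⟨h.1.symm, h.2.symm⟩
    loopless := by
      refine ⟨?_⟩
      rintro (u|x) h
      · exact H.graph.loopless.irrefl _ h
      · exact h.1 rfl }
  IsFat := fun _ => False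
  fat_not_adj := by intro x y hx _; exact hx.elim
  fat_slim_nbr := by intro x hx; exact hx.elim

/-- The Hoffman graph of Example 4.2: slim vertices `ℤ/4ℤ` (the `inl`'s), fat vertices
`f_j` for `j ∈ ℤ/4ℤ` (the `inr`'s), with edges `{0,2}`, `{1,3}` and `{i, f_j}` for
`i = j` or `i = j + 1`. -/
def exampleA3tilde : HoffmanGraph (ZMod 4 ⊕ ZMod 4) where
  graph := {
    Adj := fun a b =>
      match a, b with
      | .inl i, .inl j => j = i + 2
      | .inl i, .inr j => i = j ∨ i = j + 1
      | .inr j, .inl i => i = j ∨ i = j + 1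
      | .inr _, .inr _ => False
    symm := by
      refine ⟨?_⟩
      have h4 : (2 : ZMod 4) + 2 = 0 := by decide
      rintro (i|i) (j|j) h
      · have h' : j = i + 2 := h
        subst h'
        show i = i + 2 + 2
        rw [add_assoc, h4, add_zero]
      · exact h
      · exact h
      · exact h.elim
    loopless := by
      refine ⟨?_⟩
      rintro (i|i) h
      · exact absurd (left_eq_add.mp h) (by decide)
      · exact h }
  IsFat := fun a => match a with | .inl _ => False | .inr _ => True
  fat_not_adj := by
    rintro (i|i) (j|j) hx hy h
    · exact hx
    · exact hx
    · exact hy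
    · exact h
  fat_slim_nbr := by
    rintro (i|i) hx
    · exact hx.elim
    · exact ⟨Sum.inl i, id, Or.inl rfl⟩

end HoffmanGraph

/-- The extended Dynkin graph `D̃₄`, i.e. the star `K_{1,4}`. -/
def tildeD4Graph : SimpleGraph (Fin 5) := SimpleGraph.fromRel (fun a _ => a = 0)

/-- The Dynkin graph `A_m`: the path on `m` vertices. -/
def dynkinA (m : ℕ) : SimpleGraph (Fin m) :=
  SimpleGraph.fromRel (fun i j => i.1 + 1 = j.1)

/-- The extended Dynkin graph `Ã_m`: the cycle on `m + 1` vertices. -/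
def tildeA (m : ℕ) : SimpleGraph (ZMod (m + 1)) :=
  SimpleGraph.fromRel (fun i j => i + 1 = j)

/-- The Dynkin graph `D_m`: the path `1 - 2 - ⋯ - (m-1)` with the extra vertex `0`
attached to the vertex `2`. -/
def dynkinD (m : ℕ) : SimpleGraph (Fin m) :=
  SimpleGraph.fromRel (fun i j => (1 ≤ i.1 ∧ i.1 + 1 = j.1) ∨ (i.1 = 0 ∧ j.1 = 2))

/-- The extended Dynkin graph `D̃_m` on `m + 1` vertices: the path `1 - 2 - ⋯ - (m-1)`
with the extra vertex `0` attached to `2` and the extra vertex `m` attached to `m - 2`. -/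
def tildeD (m : ℕ) : SimpleGraph (Fin (m + 1)) :=
  SimpleGraph.fromRel (fun i j =>
    (1 ≤ i.1 ∧ i.1 + 1 = j.1 ∧ j.1 ≤ m - 1) ∨ (i.1 = 0 ∧ j.1 = 2) ∨ (i.1 = m ∧ j.1 = m - 2))
section AuxLemmas

open Matrix

lemma aux_mem_spectrum {k : Type*} [Fintype k] [DecidableEq k] {M : Matrix k k ℝ} {μ : ℝ} :
    μ ∈ spectrum ℝ M ↔ (algebraMap ℝ (Matrix k k ℝ) μ - M).det = 0 := by
  rw [spectrum.mem_iff, Matrix.isUnit_iff_isUnit_det, isUnit_iff_ne_zero, not_ne_iff]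

/-- Spectrum of a block-diagonal matrix is the union of the spectra of the blocks. -/
lemma aux_spectrum_fromBlocks {m n : Type*} [Fintype m] [Fintype n] [DecidableEq m]
    [DecidableEq n] (A : Matrix m m ℝ) (D : Matrix n n ℝ) :
    spectrum ℝ (Matrix.fromBlocks A 0 0 D) = spectrum ℝ A ∪ spectrum ℝ D := by
  ext μ
  have hblock : algebraMap ℝ (Matrix (m ⊕ n) (m ⊕ n) ℝ) μ - Matrix.fromBlocks A 0 0 D
      = Matrix.fromBlocks (algebraMap ℝ (Matrix m m ℝ) μ - A) 0 0
          (algebraMap ℝ (Matrix n n ℝ) μ - D) := by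
    simp only [Algebra.algebraMap_eq_smul_one, ← Matrix.fromBlocks_one, sub_eq_add_neg,
      Matrix.fromBlocks_smul, Matrix.fromBlocks_neg, Matrix.fromBlocks_add]
    simp
  rw [Set.mem_union, aux_mem_spectrum, aux_mem_spectrum, aux_mem_spectrum, hblock, Matrix.det_fromBlocks_zero₂₁, mul_eq_zero]

lemma aux_spectrum_nonempty {n : Type*} [Fintype n] [DecidableEq n] [Nonempty n]
    (M : Matrix n n ℝ) (hM : M.IsHermitian) : (spectrum ℝ M).Nonempty :=
  ⟨hM.eigenvalues (Classical.arbitrary n), hM.eigenvalues_mem_spectrum_real _⟩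

lemma aux_matrixB_isHermitian {V : Type*} (H : HoffmanGraph V) : H.matrixB.IsHermitian := by
  ext i j
  simp only [Matrix.conjTranspose_apply, HoffmanGraph.matrixB, star_trivial]
  rw [H.commonFat_comm j.1 i.1, SimpleGraph.adj_comm]

lemma aux_commonFat_induce {V : Type} (H : HoffmanGraph V) {W : Set V}
    (hW : H.IsGoodSubset W)
    (hcl : ∀ x ∈ W, H.IsSlim x → ∀ f, H.IsFat f → H.graph.Adj x f → f ∈ W)
    (x y : W) (hx : H.IsSlim x.1) :
    (H.induce W hW).commonFat x y = H.commonFat x.1 y.1 := by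
  unfold HoffmanGraph.commonFat
  have himg : {f : V | H.IsFat f ∧ H.graph.Adj x.1 f ∧ H.graph.Adj y.1 f}
      = Subtype.val '' {f : W | (H.induce W hW).IsFat f ∧ (H.induce W hW).graph.Adj x f ∧
          (H.induce W hW).graph.Adj y f} := by
    ext f
    constructor
    · rintro ⟨hf, hxf, hyf⟩
      exact ⟨⟨f, hcl x.1 x.2 hx f hf hxf⟩, ⟨hf, hxf, hyf⟩, rfl⟩
    · rintro ⟨⟨f', hf'W⟩, ⟨hf, hxf, hyf⟩, rfl⟩
      exact ⟨hf, hxf, hyf⟩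
  rw [himg, Set.ncard_image_of_injective _ Subtype.val_injective]

end AuxLemmas

/-- Lemma 2.12: if `𝔥 = 𝔥¹ ⊎ 𝔥²`, then
`λ_min(𝔥) = min {λ_min(𝔥¹), λ_min(𝔥²)}`. -/
theorem lambdaMin_of_sum {V : Type} [Fintype V] (H : HoffmanGraph V) (W₁ W₂ : Set V)
    (h : H.IsSum W₁ W₂) :
    H.lambdaMin = min (H.induce W₁ h.good₁).lambdaMin (H.induce W₂ h.good₂).lambdaMin := by
  set H₁ := H.induce W₁ h.good₁ with hH₁
  set H₂ := H.induce W₂ h.good₂ with hH₂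
  -- membership facts
  have hmem : ∀ v : V, v ∉ W₁ → v ∈ W₂ := by
    intro v hv
    have : v ∈ W₁ ∪ W₂ := h.union_eq ▸ Set.mem_univ v
    exact this.resolve_left hv
  have hnotW₁ : ∀ v : V, H.IsSlim v → v ∈ W₂ → v ∉ W₁ := by
    intro v hs hv2 hv1
    exact (h.slim_partition v hs).mp hv1 hv2
  -- the equivalence between slim vertices
  let e : H₁.Slim ⊕ H₂.Slim ≃ H.Slim :=
    { toFun := Sum.elim (fun x => ⟨x.1.1, x.2⟩) (fun x => ⟨x.1.1, x.2⟩)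
      invFun := fun v =>
        if hv : v.1 ∈ W₁ then Sum.inl ⟨⟨v.1, hv⟩, v.2⟩
        else Sum.inr ⟨⟨v.1, hmem v.1 hv⟩, v.2⟩
      left_inv := by
        rintro (x | x)
        · simp only [Sum.elim_inl]
          exact dif_pos x.1.2
        · simp only [Sum.elim_inr]
          exact dif_neg (hnotW₁ x.1.1 x.2 x.1.2)
      right_inv := by
        intro v
        by_cases hv : v.1 ∈ W₁
        · simp only [dif_pos hv, Sum.elim_inl]
        · simp only [dif_neg hv, Sum.elim_inr] }
  -- cross entries vanish
  have hcross : ∀ x y : V, x ∈ W₁ → y ∈ W₂ → H.IsSlim x → H.IsSlim y →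
      (if H.graph.Adj x y then (1 : ℝ) else 0) - (H.commonFat x y : ℝ) = 0 := by
    intro x y hx hy hsx hsy
    by_cases hadj : H.graph.Adj x y
    · rw [if_pos hadj, (h.common_iff x hx y hy hsx hsy).mpr hadj]
      norm_num
    · have h1 : H.commonFat x y = 0 := by
        have hle := h.common_le x hx y hy hsx hsy
        have hne : H.commonFat x y ≠ 1 := fun he =>
          hadj ((h.common_iff x hx y hy hsx hsy).mp he)
        omega
      rw [if_neg hadj, h1]
      norm_num
  -- the block decomposition
  have hsub : H.matrixB.submatrix e e = Matrix.fromBlocks H₁.matrixB 0 0 H₂.matrixB := by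
    ext i j
    cases i with
    | inl i =>
      cases j with
      | inl j =>
        show H.matrixB ⟨i.1.1, i.2⟩ ⟨j.1.1, j.2⟩ = H₁.matrixB i j
        unfold HoffmanGraph.matrixB
        rw [aux_commonFat_induce H h.good₁ h.fat_closed₁ i.1 j.1 i.2]
        rw [if_congr (Iff.rfl : H.graph.Adj i.1.1 j.1.1 ↔ H₁.graph.Adj i.1 j.1) rfl rfl]
        rfl
      | inr j =>
        show H.matrixB ⟨i.1.1, i.2⟩ ⟨j.1.1, j.2⟩ = 0
        exact hcross i.1.1 j.1.1 i.1.2 j.1.2 i.2 j.2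
    | inr i =>
      cases j with
      | inl j =>
        show H.matrixB ⟨i.1.1, i.2⟩ ⟨j.1.1, j.2⟩ = 0
        unfold HoffmanGraph.matrixB
        rw [H.commonFat_comm, SimpleGraph.adj_comm]
        exact hcross j.1.1 i.1.1 j.1.2 i.1.2 j.2 i.2
      | inr j =>
        show H.matrixB ⟨i.1.1, i.2⟩ ⟨j.1.1, j.2⟩ = H₂.matrixB i j
        unfold HoffmanGraph.matrixB
        rw [aux_commonFat_induce H h.good₂ h.fat_closed₂ i.1 j.1 i.2]
        rw [if_congr (Iff.rfl : H.graph.Adj i.1.1 j.1.1 ↔ H₂.graph.Adj i.1 j.1) rfl rfl]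
        rfl
  -- spectra
  have hspec : spectrum ℝ H.matrixB = spectrum ℝ H₁.matrixB ∪ spectrum ℝ H₂.matrixB := by
    calc spectrum ℝ H.matrixB
        = spectrum ℝ (Matrix.reindexAlgEquiv ℝ ℝ e.symm H.matrixB) :=
          (AlgEquiv.spectrum_eq _ _).symm
      _ = spectrum ℝ H₁.matrixB ∪ spectrum ℝ H₂.matrixB := by
          rw [Matrix.reindexAlgEquiv_apply, Matrix.reindex_apply, Equiv.symm_symm, hsub,
            aux_spectrum_fromBlocks]
  -- nonemptiness
  have hslim : ∀ (W : Set V), H.IsGoodSubset W → W.Nonempty → ∃ v ∈ W, H.IsSlim v := by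
    intro W hW ⟨v, hv⟩
    by_cases hf : H.IsFat v
    · obtain ⟨y, hyW, hy, _⟩ := hW v hv hf
      exact ⟨y, hyW, hy⟩
    · exact ⟨v, hv, hf⟩
  obtain ⟨v₁, hv₁, hs₁⟩ := hslim W₁ h.good₁ h.nonempty₁
  obtain ⟨v₂, hv₂, hs₂⟩ := hslim W₂ h.good₂ h.nonempty₂
  haveI : Nonempty H₁.Slim := ⟨⟨⟨v₁, hv₁⟩, hs₁⟩⟩
  haveI : Nonempty H₂.Slim := ⟨⟨⟨v₂, hv₂⟩, hs₂⟩⟩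
  -- conclusion
  rw [HoffmanGraph.lambdaMin, HoffmanGraph.lambdaMin, HoffmanGraph.lambdaMin, hspec,
    csInf_union (Matrix.finite_spectrum _).bddBelow
      (aux_spectrum_nonempty _ (aux_matrixB_isHermitian H₁))
      (Matrix.finite_spectrum _).bddBelow
      (aux_spectrum_nonempty _ (aux_matrixB_isHermitian H₂))]
  congr!
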